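/- arXiv:1305.0799 — 2 statements merged into one kernel-verified Lean document; each statement's English description precedes it below -/
import Mathlib

section
/- For any set V of pairs (X,v) with X a g-tuple of n×n real matrices and v ∈ ℝ^{ℓn} (n ranging over ℕ), the vanishing module I(V) = {p ∈ R^{1×ℓ}⟨x,x*⟩ : p(X)v = 0 for all (X,v) ∈ V} is a real left module: if Σ_i p_i*p_i ∈ R^{ℓ×1}I(V) + I(V)*R^{1×ℓ}, then each p_i ∈ I(V). -/
open scoped BigOperators

namespace NSS

/-- Words in the `2g` free letters `x_1,…,x_g,x_1^*,…,x_g^*`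
(a letter is a pair of an index and a `Bool`: `false` = unstarred, `true` = starred). -/
abbrev Word (g : ℕ) := FreeMonoid (Fin g × Bool)

/-- The free `*`-algebra `ℝ⟨x,x*⟩`. -/
abbrev NC (g : ℕ) := MonoidAlgebra ℝ (Word g)

/-- `ν × ℓ` matrices of noncommutative polynomials. -/
abbrev NCMat (g ν ℓ : ℕ) := Matrix (Fin ν) (Fin ℓ) (NC g)

/-- The involution on words: reverse the word and swap starred/unstarred letters. -/
def wordStar {g : ℕ} (w : Word g) : Word g :=
  FreeMonoid.ofList (((FreeMonoid.toList w).map (fun p => (p.1, !p.2))).reverse)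

/-- The involution on `ℝ⟨x,x*⟩`. -/
noncomputable def ncStar {g : ℕ} (p : NC g) : NC g :=
  MonoidAlgebra.ofCoeff (Finsupp.mapDomain wordStar p.coeff)

/-- The involution on matrix polynomials: transpose and apply `ncStar` entrywise. -/
noncomputable def matStar {g ν ℓ : ℕ} (p : NCMat g ν ℓ) : NCMat g ℓ ν :=
  Matrix.of fun i j => ncStar (p j i)

/-- The left action of a scalar polynomial on a matrix polynomial
(entrywise left multiplication, identifying `q` with `I ⊗ q`). -/
noncomputable def leftMul {g ν ℓ : ℕ} (q : NC g) (p : NCMat g ν ℓ) : NCMat g ν ℓ :=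
  Matrix.of fun i j => q * p i j

/-- A constant real matrix, viewed as a matrix of noncommutative polynomials. -/
noncomputable def constMat {g m n : ℕ} (A : Matrix (Fin m) (Fin n) ℝ) : NCMat g m n :=
  A.map (algebraMap ℝ (NC g))

/-- The space `ℝ^{ℓ×1}·I + I^*·ℝ^{1×ℓ}`. -/
noncomputable def realPart {g ℓ : ℕ} (I : Set (NCMat g 1 ℓ)) : Submodule ℝ (NCMat g ℓ ℓ) :=
  Submodule.span ℝ
    ({m | ∃ B : Matrix (Fin ℓ) (Fin 1) ℝ, ∃ a ∈ I, m = constMat B * a} ∪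
     {m | ∃ B : Matrix (Fin 1) (Fin ℓ) ℝ, ∃ a ∈ I, m = matStar a * constMat B})

/-- Left `ℝ⟨x,x*⟩`-submodules of `ℝ^{1×ℓ}⟨x,x*⟩`. -/
def IsLeftSubmodule {g ℓ : ℕ} (I : Set (NCMat g 1 ℓ)) : Prop :=
  0 ∈ I ∧ (∀ a b, a ∈ I → b ∈ I → a + b ∈ I) ∧
    (∀ (r : ℝ) a, a ∈ I → r • a ∈ I) ∧ ∀ (q : NC g) a, a ∈ I → leftMul q a ∈ I

/-- A left module `I` is *real* if any finite sum of hermitian squares lying in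
`ℝ^{ℓ×1}·I + I^*·ℝ^{1×ℓ}` has all its terms in `I`. -/
def IsReal {g ℓ : ℕ} (I : Set (NCMat g 1 ℓ)) : Prop :=
  ∀ (n : ℕ) (p : Fin n → NCMat g 1 ℓ),
    (∑ i, matStar (p i) * p i) ∈ realPart I → ∀ i, p i ∈ I

/-- The monomial `e_j ⊗ w ∈ ℝ^{1×ℓ}⟨x,x*⟩`. -/
noncomputable def rowMono {g ℓ : ℕ} (j : Fin ℓ) (w : Word g) : NCMat g 1 ℓ :=
  Matrix.of fun _ j' => if j' = j then (MonoidAlgebra.single w (1:ℝ) : NC g) else 0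

/-- The left `ℝ⟨x,x*⟩`-submodule generated by a set. -/
def leftSpan {g ℓ : ℕ} (G : Set (NCMat g 1 ℓ)) : Set (NCMat g 1 ℓ) :=
  ⋂₀ {J | IsLeftSubmodule J ∧ G ⊆ J}


/-- Evaluation of a word at a tuple `X` of `n×n` real matrices
(`x_i ↦ X i`, `x_i* ↦ (X i)ᵀ`). -/
noncomputable def wordEval {g n : ℕ} (X : Fin g → Matrix (Fin n) (Fin n) ℝ) (w : Word g) :
    Matrix (Fin n) (Fin n) ℝ :=
  ((FreeMonoid.toList w).map (fun p => if p.2 then Matrix.transpose (X p.1) else X p.1)).prod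

/-- Evaluation of a scalar noncommutative polynomial. -/
noncomputable def ncEval {g n : ℕ} (X : Fin g → Matrix (Fin n) (Fin n) ℝ) (p : NC g) :
    Matrix (Fin n) (Fin n) ℝ :=
  Finsupp.sum p.coeff fun w c => c • wordEval X w

/-- `p(X)v` for a row-vector polynomial `p ∈ ℝ^{1×ℓ}⟨x,x*⟩` and `v ∈ ℝ^{ℓn}`
(written as `ℓ` blocks in `ℝ^n`). -/
noncomputable def rowEval {g ℓ n : ℕ} (X : Fin g → Matrix (Fin n) (Fin n) ℝ)
    (p : NCMat g 1 ℓ) (v : Fin ℓ → Fin n → ℝ) : Fin n → ℝ :=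
  ∑ j, (ncEval X (p 0 j)).mulVec (v j)

/-- The vanishing left module of a set of points. -/
noncomputable def vanishingModule {g ℓ : ℕ}
    (V : Set (Σ n : ℕ, (Fin g → Matrix (Fin n) (Fin n) ℝ) × (Fin ℓ → Fin n → ℝ))) :
    Set (NCMat g 1 ℓ) :=
  {p | ∀ t ∈ V, rowEval t.2.1 p t.2.2 = 0}


section Aux

noncomputable def wordEvalHom {g n : ℕ} (X : Fin g → Matrix (Fin n) (Fin n) ℝ) :
    Word g →* Matrix (Fin n) (Fin n) ℝ where
  toFun := wordEval X
  map_one' := by simp [wordEval, FreeMonoid.toList_one]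
  map_mul' a b := by simp [wordEval, FreeMonoid.toList_mul]

noncomputable def ncEvalHom {g n : ℕ} (X : Fin g → Matrix (Fin n) (Fin n) ℝ) :
    NC g →ₐ[ℝ] Matrix (Fin n) (Fin n) ℝ :=
  MonoidAlgebra.lift ℝ _ (Word g) (wordEvalHom X)

lemma ncEval_eq {g n : ℕ} (X : Fin g → Matrix (Fin n) (Fin n) ℝ) (p : NC g) :
    ncEval X p = ncEvalHom X p := by
  rw [ncEvalHom, MonoidAlgebra.lift_apply]; rfl

lemma wordEval_wordStar {g n : ℕ} (X : Fin g → Matrix (Fin n) (Fin n) ℝ) (w : Word g) :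
    wordEval X (wordStar w) = Matrix.transpose (wordEval X w) := by
  unfold wordEval wordStar
  rw [FreeMonoid.toList_ofList, Matrix.transpose_list_prod, List.map_reverse, List.map_map,
    List.map_map]
  refine congrArg _ (congrArg _ (List.map_congr_left fun p _ => ?_))
  obtain ⟨i, b⟩ := p
  cases b <;> simp

lemma ncEval_ncStar {g n : ℕ} (X : Fin g → Matrix (Fin n) (Fin n) ℝ) (p : NC g) :
    ncEval X (ncStar p) = Matrix.transpose (ncEval X p) := by
  unfold ncEval ncStar
  rw [MonoidAlgebra.coeff_ofCoeff]
  rw [Finsupp.sum_mapDomain_index (by simp) (by intro b m₁ m₂; rw [add_smul])]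
  rw [Finsupp.sum, Finsupp.sum, Matrix.transpose_sum]
  exact Finset.sum_congr rfl fun w _ => by rw [wordEval_wordStar, Matrix.transpose_smul]

lemma dotProduct_sum' {n : ℕ} {ι : Type*} (s : Finset ι) (v : Fin n → ℝ) (f : ι → Fin n → ℝ) :
    dotProduct v (∑ k ∈ s, f k) = ∑ k ∈ s, dotProduct v (f k) := by
  unfold dotProduct
  rw [Finset.sum_comm]
  exact Finset.sum_congr rfl fun i _ => by simp [Finset.mul_sum]

lemma sum_dotProduct' {n : ℕ} {ι : Type*} (s : Finset ι) (v : Fin n → ℝ) (f : ι → Fin n → ℝ) :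
    dotProduct (∑ k ∈ s, f k) v = ∑ k ∈ s, dotProduct (f k) v := by
  unfold dotProduct
  rw [Finset.sum_comm]
  exact Finset.sum_congr rfl fun i _ => by simp [Finset.sum_mul]

lemma mulVec_sum' {n : ℕ} {ι : Type*} (s : Finset ι) (M : Matrix (Fin n) (Fin n) ℝ)
    (f : ι → Fin n → ℝ) : M.mulVec (∑ j ∈ s, f j) = ∑ j ∈ s, M.mulVec (f j) := by
  have h := map_sum M.mulVecLin f s
  simp only [Matrix.mulVecLin_apply] at h
  exact h

lemma rowEval_zero {g ℓ n : ℕ} (X : Fin g → Matrix (Fin n) (Fin n) ℝ) (v : Fin ℓ → Fin n → ℝ) :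
    rowEval X (0 : NCMat g 1 ℓ) v = 0 := by
  simp [rowEval, ncEval_eq, Matrix.zero_mulVec]

lemma rowEval_add {g ℓ n : ℕ} (X : Fin g → Matrix (Fin n) (Fin n) ℝ) (a b : NCMat g 1 ℓ)
    (v : Fin ℓ → Fin n → ℝ) : rowEval X (a + b) v = rowEval X a v + rowEval X b v := by
  simp [rowEval, ncEval_eq, Matrix.add_apply, Matrix.add_mulVec, Finset.sum_add_distrib]

lemma rowEval_smul {g ℓ n : ℕ} (X : Fin g → Matrix (Fin n) (Fin n) ℝ) (r : ℝ) (a : NCMat g 1 ℓ)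
    (v : Fin ℓ → Fin n → ℝ) : rowEval X (r • a) v = r • rowEval X a v := by
  simp [rowEval, ncEval_eq, Matrix.smul_apply, Matrix.smul_mulVec, Finset.smul_sum]

lemma rowEval_leftMul {g ℓ n : ℕ} (X : Fin g → Matrix (Fin n) (Fin n) ℝ) (q : NC g)
    (a : NCMat g 1 ℓ) (v : Fin ℓ → Fin n → ℝ) :
    rowEval X (leftMul q a) v = (ncEval X q).mulVec (rowEval X a v) := by
  unfold rowEval
  rw [mulVec_sum']
  refine Finset.sum_congr rfl fun j _ => ?_
  simp only [leftMul, Matrix.of_apply, ncEval_eq, map_mul, Matrix.mulVec_mulVec]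

/-- The quadratic evaluation functional `m ↦ vᵀ m(X) v`. -/
noncomputable def Efun {g ℓ n : ℕ} (X : Fin g → Matrix (Fin n) (Fin n) ℝ)
    (v : Fin ℓ → Fin n → ℝ) : NCMat g ℓ ℓ →ₗ[ℝ] ℝ where
  toFun m := ∑ j, ∑ k, dotProduct (v j) ((ncEval X (m j k)).mulVec (v k))
  map_add' a b := by
    simp [ncEval_eq, Matrix.add_apply, Matrix.add_mulVec, dotProduct_add,
      Finset.sum_add_distrib]
  map_smul' r a := by
    simp [ncEval_eq, Matrix.smul_apply, Matrix.smul_mulVec, dotProduct_smul,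
      Finset.smul_sum, Finset.mul_sum]

lemma Efun_apply {g ℓ n : ℕ} (X : Fin g → Matrix (Fin n) (Fin n) ℝ)
    (v : Fin ℓ → Fin n → ℝ) (m : NCMat g ℓ ℓ) :
    Efun X v m = ∑ j, ∑ k, dotProduct (v j) ((ncEval X (m j k)).mulVec (v k)) := rfl

lemma Efun_vanish {g ℓ n : ℕ} (X : Fin g → Matrix (Fin n) (Fin n) ℝ) (v : Fin ℓ → Fin n → ℝ)
    (I : Set (NCMat g 1 ℓ)) (hI : ∀ a ∈ I, rowEval X a v = 0)
    {m : NCMat g ℓ ℓ} (hm : m ∈ realPart I) : Efun X v m = 0 := by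
  unfold realPart at hm
  induction hm using Submodule.span_induction with
  | mem x hx =>
    rcases hx with hx | hx
    · obtain ⟨B, a, ha, rfl⟩ := hx
      rw [Efun_apply]
      refine Finset.sum_eq_zero fun j _ => ?_
      have hterm : ∀ k, dotProduct (v j) ((ncEval X ((constMat B * a : NCMat g ℓ ℓ) j k)).mulVec (v k))
          = (B j 0) • dotProduct (v j) ((ncEval X (a 0 k)).mulVec (v k)) := by
        intro k
        have hent : (constMat B * a : NCMat g ℓ ℓ) j k = algebraMap ℝ (NC g) (B j 0) * a 0 k := by
          show ∑ i : Fin 1, constMat B j i * a i k = _; rw [Fin.sum_univ_one]; rfl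
        rw [hent, ncEval_eq, map_mul, AlgHom.commutes, ncEval_eq, ← Algebra.smul_def,
          Matrix.smul_mulVec, dotProduct_smul]
      simp_rw [hterm]
      rw [← Finset.smul_sum, ← dotProduct_sum']
      rw [show (∑ k, (ncEval X (a 0 k)).mulVec (v k)) = rowEval X a v from rfl, hI a ha]
      simp
    · obtain ⟨B, a, ha, rfl⟩ := hx
      rw [Efun_apply]
      have hterm : ∀ j k,
          dotProduct (v j) ((ncEval X ((matStar a * constMat B : NCMat g ℓ ℓ) j k)).mulVec (v k))
          = (B 0 k) • dotProduct ((ncEval X (a 0 j)).mulVec (v j)) (v k) := by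
        intro j k
        have hent : (matStar a * constMat B : NCMat g ℓ ℓ) j k = ncStar (a 0 j) * algebraMap ℝ (NC g) (B 0 k) := by
          show ∑ i : Fin 1, matStar a j i * constMat B i k = _; rw [Fin.sum_univ_one]; rfl
        rw [hent, ncEval_eq, map_mul, AlgHom.commutes, ← ncEval_eq, ← Algebra.commutes,
          ← Algebra.smul_def, ncEval_ncStar, Matrix.smul_mulVec, dotProduct_smul,
          Matrix.dotProduct_mulVec, Matrix.vecMul_transpose]
      simp_rw [hterm]
      rw [Finset.sum_comm]
      refine Finset.sum_eq_zero fun k _ => ?_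
      rw [← Finset.smul_sum, ← sum_dotProduct']
      rw [show (∑ j, (ncEval X (a 0 j)).mulVec (v j)) = rowEval X a v from rfl, hI a ha]
      simp
  | zero => exact map_zero _
  | add x y hx hy ihx ihy => rw [map_add, ihx, ihy, add_zero]
  | smul r x hx ihx => rw [map_smul, ihx, smul_zero]

lemma Efun_hermSq {g ℓ n : ℕ} (X : Fin g → Matrix (Fin n) (Fin n) ℝ) (v : Fin ℓ → Fin n → ℝ)
    (p : NCMat g 1 ℓ) :
    Efun X v (matStar p * p) = dotProduct (rowEval X p v) (rowEval X p v) := by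
  rw [Efun_apply]
  unfold rowEval
  rw [sum_dotProduct']
  refine Finset.sum_congr rfl fun j _ => ?_
  rw [dotProduct_sum']
  refine Finset.sum_congr rfl fun k _ => ?_
  have hent : (matStar p * p : NCMat g ℓ ℓ) j k = ncStar (p 0 j) * p 0 k := by
    simp [Matrix.mul_apply, matStar, Fin.sum_univ_one]
  rw [hent, ncEval_eq, map_mul, ← ncEval_eq, ← ncEval_eq, ncEval_ncStar,
    ← Matrix.mulVec_mulVec, Matrix.dotProduct_mulVec, Matrix.vecMul_transpose]

end Aux

/-- for any set `V` of pairs `(X,v)`, the vanishing module `I(V)` is a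
real left module. -/
theorem stmt5 {g ℓ : ℕ}
    (V : Set (Σ n : ℕ, (Fin g → Matrix (Fin n) (Fin n) ℝ) × (Fin ℓ → Fin n → ℝ))) :
    IsLeftSubmodule (vanishingModule V) ∧ IsReal (vanishingModule V) := by
  constructor
  · refine ⟨?_, ?_, ?_, ?_⟩
    · intro t _
      exact rowEval_zero _ _
    · intro a b ha hb t ht
      rw [rowEval_add, ha t ht, hb t ht, add_zero]
    · intro r a ha t ht
      rw [rowEval_smul, ha t ht, smul_zero]
    · intro q a ha t ht
      rw [rowEval_leftMul, ha t ht, Matrix.mulVec_zero]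
  · intro N p hp i
    show ∀ t ∈ V, rowEval t.2.1 (p i) t.2.2 = 0
    rintro ⟨n, X, v⟩ ht
    have h0 : Efun X v (∑ i, matStar (p i) * p i) = 0 :=
      Efun_vanish X v (vanishingModule V) (fun a ha => ha ⟨n, X, v⟩ ht) hp
    rw [map_sum] at h0
    simp_rw [Efun_hermSq] at h0
    have hz := (Finset.sum_eq_zero_iff_of_nonneg
      (fun j _ => Finset.sum_nonneg fun i _ => mul_self_nonneg _)).mp h0 i (Finset.mem_univ i)
    exact dotProduct_self_eq_zero.mp hz

end NSS
end

section
/- Let 𝔠 ⊆ R^{1×ℓ}⟨x,x*⟩ be a right chip space. Then 𝔠*·R⟨x,x*⟩·𝔠 = ⨁_{i,j ∈ Γ(𝔠)} E_{ij} ⊗ R⟨x,x*⟩, where Γ(𝔠) = {j : e_j ⊗ 1 ∈ 𝔠}. -/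
open scoped BigOperators

namespace NSS

/-- A set of row monomials (indexed by column and word) closed under right chips. -/
def IsRightChipClosed {g ℓ : ℕ} (S : Set (Fin ℓ × Word g)) : Prop :=
  ∀ (j : Fin ℓ) (u v : Word g), (j, u * v) ∈ S → (j, v) ∈ S

/-- The right chip space spanned by a chip-closed set of monomials. -/
noncomputable def chipSpace {g ℓ : ℕ} (S : Set (Fin ℓ × Word g)) :
    Submodule ℝ (NCMat g 1 ℓ) :=
  Submodule.span ℝ {p | ∃ m ∈ S, p = rowMono m.1 m.2}

/-- The space `ℝ⟨x,x*⟩·𝔠`. -/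
noncomputable def algSpanChip {g ℓ : ℕ} (S : Set (Fin ℓ × Word g)) :
    Submodule ℝ (NCMat g 1 ℓ) :=
  Submodule.span ℝ {p | ∃ q : NC g, ∃ c ∈ chipSpace S, p = leftMul q c}

/-- `Γ(𝔠)`: the set of columns `j` with `e_j ⊗ 1 ∈ 𝔠`. -/
def Gam {g ℓ : ℕ} (S : Set (Fin ℓ × Word g)) : Set (Fin ℓ) :=
  {j | (j, (1 : Word g)) ∈ S}

/-- The direct sum `⨁_{j ∈ Γ} e_j ⊗ ℝ⟨x,x*⟩`, i.e. row polynomials supported on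
columns in `Γ`. -/
noncomputable def colSupported {g ℓ : ℕ} (Γ : Set (Fin ℓ)) : Submodule ℝ (NCMat g 1 ℓ) where
  carrier := {p | ∀ j ∉ Γ, p 0 j = 0}
  add_mem' := by
    intro a b ha hb j hj
    simp [Matrix.add_apply, ha j hj, hb j hj]
  zero_mem' := by intro j hj; simp
  smul_mem' := by
    intro c a ha j hj
    simp [Matrix.smul_apply, ha j hj]

/-- The space `𝔠*·ℝ⟨x,x*⟩·𝔠 ⊆ ℝ^{ℓ×ℓ}⟨x,x*⟩`. -/
noncomputable def midSpan {g ℓ : ℕ} (S : Set (Fin ℓ × Word g)) :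
    Submodule ℝ (NCMat g ℓ ℓ) :=
  Submodule.span ℝ
    {p | ∃ c₁ ∈ chipSpace S, ∃ q : NC g, ∃ c₂ ∈ chipSpace S, p = matStar c₁ * leftMul q c₂}

/-- `⨁_{i,j ∈ Γ} E_{ij} ⊗ ℝ⟨x,x*⟩`: `ℓ×ℓ` matrix polynomials supported on `Γ × Γ`. -/
noncomputable def entrySupported {g ℓ : ℕ} (Γ : Set (Fin ℓ)) : Submodule ℝ (NCMat g ℓ ℓ) where
  carrier := {p | ∀ i j, i ∉ Γ ∨ j ∉ Γ → p i j = 0}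
  add_mem' := by
    intro a b ha hb i j hij
    simp [Matrix.add_apply, ha i j hij, hb i j hij]
  zero_mem' := by intro i j hij; simp
  smul_mem' := by
    intro c a ha i j hij
    simp [Matrix.smul_apply, ha i j hij]

lemma ncStar_zero {g : ℕ} : ncStar (0 : NC g) = 0 := by
  simp [ncStar, Finsupp.mapDomain_zero]

lemma wordStar_one {g : ℕ} : wordStar (1 : Word g) = 1 := rfl

lemma ncStar_single {g : ℕ} (w : Word g) (r : ℝ) :
    ncStar (MonoidAlgebra.single w r : NC g) = MonoidAlgebra.single (wordStar w) r := by
  simp only [ncStar, MonoidAlgebra.coeff_single, Finsupp.mapDomain_single, MonoidAlgebra.ofCoeff_single]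

lemma ncStar_single_one {g : ℕ} :
    ncStar (MonoidAlgebra.single (1 : Word g) (1:ℝ) : NC g) = 1 := by
  rw [ncStar_single, wordStar_one]; rfl

lemma single_one_mul {g : ℕ} (a : NC g) :
    (MonoidAlgebra.single (1 : Word g) (1:ℝ) : NC g) * a = a := by
  rw [show (MonoidAlgebra.single (1 : Word g) (1:ℝ) : NC g) = 1 from rfl, one_mul]

lemma mul_single_one {g : ℕ} (a : NC g) :
    a * (MonoidAlgebra.single (1 : Word g) (1:ℝ) : NC g) = a := by
  rw [show (MonoidAlgebra.single (1 : Word g) (1:ℝ) : NC g) = 1 from rfl, mul_one]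

lemma chip_col_zero {g ℓ : ℕ} {S : Set (Fin ℓ × Word g)} (hS : IsRightChipClosed S)
    {c : NCMat g 1 ℓ} (hc : c ∈ chipSpace S) {j : Fin ℓ} (hj : j ∉ Gam S) :
    c 0 j = 0 := by
  induction hc using Submodule.span_induction with
  | mem p hp =>
    obtain ⟨m, hm, rfl⟩ := hp
    have hm1 : m.1 ∈ Gam S := hS m.1 m.2 1 (by rwa [mul_one])
    have : j ≠ m.1 := fun h => hj (h ▸ hm1)
    simp [rowMono, this]
  | zero => rfl
  | add a b _ _ ha hb => simp [Matrix.add_apply, ha, hb]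
  | smul r a _ ha => simp [Matrix.smul_apply, ha]

/-- `𝔠*·ℝ⟨x,x*⟩·𝔠 = ⨁_{i,j ∈ Γ(𝔠)} E_{ij} ⊗ ℝ⟨x,x*⟩`. -/
theorem stmt9 {g ℓ : ℕ} (S : Set (Fin ℓ × Word g)) (hS : IsRightChipClosed S) :
    midSpan S = entrySupported (Gam S) := by
  apply le_antisymm
  · rw [midSpan, Submodule.span_le]
    rintro p ⟨c₁, hc₁, q, c₂, hc₂, rfl⟩
    intro i j hij
    show ((matStar c₁ * leftMul q c₂) : NCMat g ℓ ℓ) i j = 0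
    rw [Matrix.mul_apply, Fin.sum_univ_one]
    rcases hij with hi | hj
    · have : c₁ 0 i = 0 := chip_col_zero hS hc₁ hi
      simp [matStar, this, ncStar_zero]
    · have : c₂ 0 j = 0 := chip_col_zero hS hc₂ hj
      simp [leftMul, this]
  · intro p hp
    classical
    have key : ∀ i j : Fin ℓ, i ∈ Gam S → j ∈ Gam S →
        (Matrix.of fun i' j' => if i' = i ∧ j' = j then p i j else 0 : NCMat g ℓ ℓ)
          ∈ midSpan S := by
      intro i j hi hj
      apply Submodule.subset_span
      refine ⟨rowMono i 1, Submodule.subset_span ⟨(i,1), hi, rfl⟩, p i j,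
        rowMono j 1, Submodule.subset_span ⟨(j,1), hj, rfl⟩, ?_⟩
      refine Matrix.ext fun i' j' => ?_
      rw [Matrix.mul_apply, Fin.sum_univ_one]
      show (if i' = i ∧ j' = j then p i j else 0)
        = ncStar ((rowMono i (1:Word g)) 0 i') * (p i j * (rowMono j (1:Word g)) 0 j')
      simp only [rowMono, Matrix.of_apply]
      by_cases h1 : i' = i <;> by_cases h2 : j' = j <;>
        simp [h1, h2, ncStar_zero, ncStar_single_one, mul_single_one]
    have hP : p = ∑ i : Fin ℓ, ∑ j : Fin ℓ,
        (Matrix.of fun i' j' => if i' = i ∧ j' = j then p i j else 0 : NCMat g ℓ ℓ) := by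
      refine Matrix.ext fun i' j' => ?_
      simp [Matrix.sum_apply, ite_and, Finset.sum_ite_eq]
    rw [hP]
    apply Submodule.sum_mem; intro i _
    apply Submodule.sum_mem; intro j _
    by_cases hi : i ∈ Gam S
    · by_cases hj : j ∈ Gam S
      · exact key i j hi hj
      · have : p i j = 0 := hp i j (Or.inr hj)
        convert (midSpan S).zero_mem using 1
        exact Matrix.ext fun i' j' => by simp [this]
    · have : p i j = 0 := hp i j (Or.inl hi)
      convert (midSpan S).zero_mem using 1
      exact Matrix.ext fun i' j' => by simp [this]

end NSS
end
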